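/- arXiv:1705.08961 — 6 statements merged into one kernel-verified Lean document; each statement's English description precedes it below -/
import Mathlib

section
/- Theorem 1, applicability part (safety of learned preconditions): Let a be an action with true preconditions pre(a) and effects eff(a), and let T(a) be a nonempty set of pairs (s, s') each consistent with the true model (s satisfies pre(a) and s' = apply s a). Let preU(a) be the learned conservative preconditions, characterized by: preU(a) i = some v if and only if every pair (s, s') ∈ T(a) has s i = v. Then for every state t, if t satisfies preU(a), then t satisfies pre(a); i.e., applicability of a at t according to the learned model implies applicability according to the true model. -/
/-- A state `s : X → V` satisfies a partial assignment `p : X → Option V`. -/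
def Satisfies {X V : Type*} (s : X → V) (p : X → Option V) : Prop :=
  ∀ i v, p i = some v → s i = v

/-- Applying an action with effects `eff` to a state `s`. -/
def applyAct {X V : Type*} (s : X → V) (eff : X → Option V) : X → V :=
  fun i => (eff i).getD (s i)

/-- Theorem 1, applicability part: if the learned conservative precondition
`preU` consists exactly of the assignments common to all observed pre-states
of a nonempty set of pairs consistent with the true model, then any state
satisfying `preU` also satisfies the true precondition `pre`. -/
theorem learned_preconditions_safe {X V : Type*}
    (pre eff : X → Option V) (T : Set ((X → V) × (X → V)))
    (hne : T.Nonempty)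
    (hcons : ∀ p ∈ T, Satisfies p.1 pre ∧ p.2 = applyAct p.1 eff)
    (preU : X → Option V)
    (hpreU : ∀ i v, preU i = some v ↔ ∀ p ∈ T, p.1 i = v)
    (t : X → V) (ht : Satisfies t preU) :
    Satisfies t pre := by
  intro i v hv
  exact ht i v ((hpreU i v).mpr (fun p hp => (hcons p hp).1 i v hv))
end

section
/- Theorem 1, effects part (safety of learned effects): Let a be an action with true preconditions pre(a) and effects eff(a), and let T(a) be a nonempty set of pairs (s, s') each consistent with the true model (s satisfies pre(a) and s' = apply s a). Let preU(a) be the learned preconditions, characterized by preU(a) i = some v iff every (s, s') ∈ T(a) has s i = v, and let effL(a) be the learned effects, characterized by effL(a) i = some v iff some (s, s') ∈ T(a) has s' i = v and s i ≠ v. Then for every state t that satisfies preU(a), applying a to t under the learned effects gives the same result as under the true effects: for every variable i, (effL(a) i).getD (t i) = (eff a i).getD (t i). -/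
/-- Theorem 1, effects part: for any state `t` satisfying the learned
conservative preconditions `preU`, applying the learned effects `effL`
gives the same result as applying the true effects `eff`. -/
theorem learned_effects_safe {X V : Type*}
    (pre eff : X → Option V) (T : Set ((X → V) × (X → V)))
    (hne : T.Nonempty)
    (hcons : ∀ p ∈ T, Satisfies p.1 pre ∧ p.2 = applyAct p.1 eff)
    (preU effL : X → Option V)
    (hpreU : ∀ i v, preU i = some v ↔ ∀ p ∈ T, p.1 i = v)
    (heffL : ∀ i v, effL i = some v ↔ ∃ p ∈ T, p.2 i = v ∧ p.1 i ≠ v)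
    (t : X → V) (ht : Satisfies t preU) :
    ∀ i, (effL i).getD (t i) = (eff i).getD (t i) := by
  intro i
  cases hEL : effL i with
  | some v =>
    obtain ⟨p, hp, h2, h1⟩ := (heffL i v).mp hEL
    have happ := (hcons p hp).2
    have : (eff i).getD (p.1 i) = v := by
      rw [happ] at h2; exact h2
    cases hE : eff i with
    | none => simp [hE] at this; exact absurd this h1
    | some w => simp [hE] at this; simp [this]
  | none =>
    cases hE : eff i with
    | none => rfl
    | some w =>
      have hall : ∀ p ∈ T, p.1 i = w := by
        intro p hp
        have happ := (hcons p hp).2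
        have h2 : p.2 i = w := by rw [happ]; simp [applyAct, hE]
        by_contra hne'
        have : effL i = some w := (heffL i w).mpr ⟨p, hp, h2, hne'⟩
        rw [hEL] at this; exact nomatch this
      have : t i = w := ht i w ((hpreU i w).mpr hall)
      simp [this]
end

section
/- Corollary 1 (Soundness of the conservative model-free planner): Suppose every action a in a list of actions π = [a₁, …, a_k] has a nonempty set T(a) of observed pairs, each consistent with the true action model (pre, eff), and let (preU, effL) be the learned action model characterized by: preU(a) i = some v iff every (s, s') ∈ T(a) has s i = v, and effL(a) i = some v iff some (s, s') ∈ T(a) has s' i = v and s i ≠ v. If π is executable from an initial state s_I under the learned model and its final state under the learned model satisfies a goal partial assignment s_G, then π is also executable from s_I under the true model, its final state under the true model equals its final state under the learned model, and hence the final state under the true model satisfies s_G. -/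
/-- Applying action `a` to state `s` under the action model whose effects are
given by `E`. -/
def applyM {X V A : Type*} (E : A → X → Option V) (s : X → V) (a : A) : X → V :=
  fun i => (E a i).getD (s i)

/-- A list of actions is executable from a state under the action model
`(P, E)`: each action's precondition holds at the state reached so far. -/
def Executable {X V A : Type*} (P E : A → X → Option V) : (X → V) → List A → Prop
  | _, [] => True
  | s, a :: rest => Satisfies s (P a) ∧ Executable P E (applyM E s a) rest

/-- Corollary 1 (soundness of the conservative model-free planner): if every
action of the plan `π` has a nonempty set of observed pairs consistent with
the true model `(pre, eff)`, and `(preU, effL)` is the learned conservative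
model, then any plan executable under the learned model that reaches the goal
`s_G` is also executable under the true model, reaches the same final state,
and hence achieves the goal. -/
theorem conservative_planner_sound {X V A : Type*}
    (pre eff preU effL : A → X → Option V)
    (T : A → Set ((X → V) × (X → V)))
    (π : List A) (sI : X → V) (sG : X → Option V)
    (hne : ∀ a ∈ π, (T a).Nonempty)
    (hcons : ∀ a ∈ π, ∀ p ∈ T a, Satisfies p.1 (pre a) ∧ p.2 = applyM eff p.1 a)
    (hpreU : ∀ a ∈ π, ∀ i v, preU a i = some v ↔ ∀ p ∈ T a, p.1 i = v)
    (heffL : ∀ a ∈ π, ∀ i v, effL a i = some v ↔ ∃ p ∈ T a, p.2 i = v ∧ p.1 i ≠ v)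
    (hexec : Executable preU effL sI π)
    (hgoal : Satisfies (π.foldl (applyM effL) sI) sG) :
    Executable pre eff sI π ∧
      π.foldl (applyM eff) sI = π.foldl (applyM effL) sI ∧
      Satisfies (π.foldl (applyM eff) sI) sG := by
  induction π generalizing sI with
  | nil => exact ⟨trivial, rfl, hgoal⟩
  | cons a rest ih =>
    obtain ⟨hpre, hrest⟩ := hexec
    have ha : a ∈ a :: rest := List.mem_cons_self
    have hsatpre : Satisfies sI (pre a) := by
      intro i v hv
      exact hpre i v ((hpreU a ha i v).2 fun p hp => (hcons a ha p hp).1 i v hv)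
    have happ : applyM eff sI a = applyM effL sI a := by
      funext i
      show (eff a i).getD (sI i) = (effL a i).getD (sI i)
      cases heff : eff a i with
      | none =>
        cases hL : effL a i with
        | none => rfl
        | some w =>
          obtain ⟨p, hp, h2, h1⟩ := (heffL a ha i w).1 hL
          rw [(hcons a ha p hp).2] at h2
          simp [applyM, heff] at h2
          exact absurd h2 h1
      | some v =>
        cases hL : effL a i with
        | some w =>
          obtain ⟨p, hp, h2, h1⟩ := (heffL a ha i w).1 hL
          rw [(hcons a ha p hp).2] at h2
          simp [applyM, heff] at h2
          simp [h2]
        | none =>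
          have hall : ∀ p ∈ T a, p.1 i = v := by
            intro p hp
            by_contra hne'
            have : effL a i = some v := (heffL a ha i v).2
              ⟨p, hp, by rw [(hcons a ha p hp).2]; simp [applyM, heff], hne'⟩
            simp [hL] at this
          have := hpre i v ((hpreU a ha i v).2 hall)
          simp [this]
    simp only [List.foldl_cons] at hgoal ⊢
    obtain ⟨e1, e2, e3⟩ := ih (applyM effL sI a)
      (fun a' h => hne a' (List.mem_cons_of_mem _ h))
      (fun a' h => hcons a' (List.mem_cons_of_mem _ h))
      (fun a' h => hpreU a' (List.mem_cons_of_mem _ h))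
      (fun a' h => heffL a' (List.mem_cons_of_mem _ h))
      hrest hgoal
    rw [happ]
    exact ⟨⟨hsatpre, happ ▸ e1⟩, e2, e3⟩
end

section
/- Trajectory replay under the learned model (deterministic core of Lemma 2): Let ⟨s₁, a₁, s₂, …, a_{n-1}, s_n⟩ be a trajectory consistent with the true action model, i.e., for each j, s_j satisfies pre(a_j) and s_{j+1} = apply s_j a_j. Suppose each action a_j has a nonempty set T(a_j) of observed pairs consistent with the true model, and let (preU, effL) be the learned action model characterized by: preU(a) i = some v iff every (s, s') ∈ T(a) has s i = v, and effL(a) i = some v iff some (s, s') ∈ T(a) has s' i = v and s i ≠ v. If additionally each state s_j satisfies preU(a_j), then the action list [a₁, …, a_{n-1}] is executable from s₁ under the learned model, and executing the first j actions under the learned model from s₁ yields exactly the state s_{j+1} for every j. -/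

private lemma replay_aux {X V A : Type*} (P E : A → X → Option V) :
    ∀ (n : ℕ) (states : Fin (n + 1) → X → V) (acts : Fin n → A),
      (∀ j : Fin n, Satisfies (states j.castSucc) (P (acts j))) →
      (∀ j : Fin n, applyM E (states j.castSucc) (acts j) = states j.succ) →
      Executable P E (states 0) (List.ofFn acts) ∧
        ∀ j : Fin (n + 1),
          ((List.ofFn acts).take j).foldl (applyM E) (states 0) = states j := by
  intro n
  induction n with
  | zero =>
    intro states acts _ _
    refine ⟨trivial, fun j => ?_⟩
    have : j = 0 := Fin.fin_one_eq_zero j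
    subst this
    simp
  | succ n ih =>
    intro states acts hsat hstep
    have key := ih (fun j => states j.succ) (fun i => acts i.succ)
      (fun j => by
        have := hsat j.succ
        rwa [show (j.succ : Fin (n+1)).castSucc = (j.castSucc : Fin (n+1)).succ from
          (Fin.succ_castSucc j).symm] at this)
      (fun j => by
        have := hstep j.succ
        rwa [show (j.succ : Fin (n+1)).castSucc = (j.castSucc : Fin (n+1)).succ from
          (Fin.succ_castSucc j).symm] at this)
    have h0 : applyM E (states 0) (acts 0) = states 1 := by
      have := hstep 0
      simpa using this
    constructor
    · rw [List.ofFn_succ]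
      refine ⟨by simpa using hsat 0, ?_⟩
      rw [h0]
      exact key.1
    · intro j
      induction j using Fin.cases with
      | zero => simp
      | succ k =>
        have hk := key.2 k
        rw [List.ofFn_succ]
        have hcoe : ((k.succ : Fin (n+2)) : ℕ) = (k : ℕ) + 1 := rfl
        rw [hcoe, List.take_succ_cons, List.foldl_cons, h0]
        simpa using hk

/-- Deterministic core of Lemma 2 (trajectory replay under the learned
model): given a trajectory `⟨s₀, a₀, s₁, …, a_{n-1}, s_n⟩` consistent with the
true model `(pre, eff)`, where every action has a nonempty set of consistent
observed pairs and every state of the trajectory satisfies the learned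
conservative precondition of the action applied at it, the list of actions is
executable from `s₀` under the learned model `(preU, effL)`, and executing the
first `j` actions under the learned model reproduces state `s_j`. -/
theorem trajectory_replay {X V A : Type*} (n : ℕ)
    (pre eff preU effL : A → X → Option V)
    (T : A → Set ((X → V) × (X → V)))
    (states : Fin (n + 1) → X → V) (acts : Fin n → A)
    (htraj : ∀ j : Fin n,
      Satisfies (states j.castSucc) (pre (acts j)) ∧
      states j.succ = applyM eff (states j.castSucc) (acts j))
    (hne : ∀ j : Fin n, (T (acts j)).Nonempty)
    (hcons : ∀ j : Fin n, ∀ p ∈ T (acts j),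
      Satisfies p.1 (pre (acts j)) ∧ p.2 = applyM eff p.1 (acts j))
    (hpreU : ∀ j : Fin n, ∀ i v,
      preU (acts j) i = some v ↔ ∀ p ∈ T (acts j), p.1 i = v)
    (heffL : ∀ j : Fin n, ∀ i v,
      effL (acts j) i = some v ↔ ∃ p ∈ T (acts j), p.2 i = v ∧ p.1 i ≠ v)
    (hsat : ∀ j : Fin n, Satisfies (states j.castSucc) (preU (acts j))) :
    Executable preU effL (states 0) (List.ofFn acts) ∧
      ∀ j : Fin (n + 1),
        ((List.ofFn acts).take j).foldl (applyM effL) (states 0) = states j := by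
  have hstep : ∀ j : Fin n, applyM effL (states j.castSucc) (acts j) = states j.succ := by
    intro j
    funext i
    rw [(htraj j).2]
    unfold applyM
    rcases h : effL (acts j) i with _ | v
    · -- effL gives none
      rcases h2 : eff (acts j) i with _ | v
      · simp
      · -- eff gives some v; show all observed predecessors already had value v
        have hall : ∀ p ∈ T (acts j), p.1 i = v := by
          intro p hp
          by_contra hne'
          have h2' : p.2 i = v := by
            rw [(hcons j p hp).2]
            simp [applyM, h2]
          have : effL (acts j) i = some v :=
            (heffL j i v).2 ⟨p, hp, h2', hne'⟩
          simp [h] at this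
        have hpu : preU (acts j) i = some v := (hpreU j i v).2 hall
        have := hsat j i v hpu
        simp [this]
    · -- effL gives some v
      obtain ⟨p, hp, hp2, hp1⟩ := (heffL j i v).1 h
      have : eff (acts j) i = some v := by
        have := (hcons j p hp).2
        have h2 : p.2 i = (eff (acts j) i).getD (p.1 i) := by rw [this]; rfl
        rcases he : eff (acts j) i with _ | w
        · rw [he] at h2; simp at h2; exact absurd (h2.symm.trans hp2) hp1
        · rw [he] at h2; simp at h2; rw [hp2] at h2; rw [h2]
      simp [this]
  exact replay_aux preU effL n states acts hsat hstep
end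

section
/- Lemma 3 (no inadequate action model survives): Let (Ω, μ) be a probability space, let ε, δ ∈ (0,1), let d ≥ 2 and K be natural numbers, and let B be a finite set with |B| ≤ d^K (the set of ε-inadequate precondition assignments). For each b ∈ B let W_b ⊆ Ω be a measurable set with μ(W_b) ≥ ε/2 (the event of sampling a trajectory that rules out b). Let m be a natural number with (m : ℝ) ≥ (2 · Real.log d) / ε · (K + Real.logb 2 (2 / δ)), and let μ^m be the product measure on Fin m → Ω of m independent copies of μ. Then μ^m {ω | ∃ b ∈ B, ∀ i : Fin m, ω i ∉ W_b} ≤ δ/2. -/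
open MeasureTheory

lemma real_key (ε δ : ℝ) (hε : ε ∈ Set.Ioo (0:ℝ) 1) (hδ : δ ∈ Set.Ioo (0:ℝ) 1)
    (d K m : ℕ) (hd : 2 ≤ d)
    (hm : (m : ℝ) ≥ (2 * Real.log d) / ε * (K + Real.logb 2 (2 / δ))) :
    (d : ℝ) ^ K * (1 - ε / 2) ^ m ≤ δ / 2 := by
  obtain ⟨hε0, hε1⟩ := hε
  obtain ⟨hδ0, hδ1⟩ := hδ
  have hd0 : (0:ℝ) < d := by positivity
  have hlog2 : (0:ℝ) < Real.log 2 := Real.log_pos (by norm_num)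
  have hlogd : Real.log 2 ≤ Real.log d := Real.log_le_log (by norm_num) (by exact_mod_cast hd)
  have hL : 0 ≤ Real.log (2 / δ) := Real.log_nonneg (by rw [le_div_iff₀ hδ0]; linarith)
  set L := Real.log (2 / δ) with hLdef
  have h1 : Real.log d * ((K:ℝ) + L / Real.log 2) ≤ ε / 2 * m := by
    have := mul_le_mul_of_nonneg_left hm (le_of_lt (half_pos hε0))
    calc Real.log d * ((K:ℝ) + L / Real.log 2)
        = ε / 2 * ((2 * Real.log d) / ε * ((K:ℝ) + Real.logb 2 (2/δ))) := by
          rw [Real.logb]; field_simp; ring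
      _ ≤ ε / 2 * m := this
  have h2 : (K:ℝ) * Real.log d + L ≤ ε / 2 * m := by
    have h3 : L ≤ Real.log d * (L / Real.log 2) := by
      rw [mul_div_assoc', le_div_iff₀ hlog2]
      nlinarith [mul_le_mul_of_nonneg_right hlogd hL]
    have hexp : Real.log d * ((K:ℝ) + L / Real.log 2)
        = (K:ℝ) * Real.log d + Real.log d * (L / Real.log 2) := by ring
    linarith
  have hexpd : (d : ℝ) ^ K = Real.exp ((K:ℝ) * Real.log d) := by
    rw [Real.exp_nat_mul, Real.exp_log hd0]
  have hpow : (1 - ε / 2) ^ m ≤ Real.exp ((m:ℝ) * -(ε/2)) := by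
    rw [Real.exp_nat_mul]
    exact pow_le_pow_left₀ (by linarith) (by linarith [Real.add_one_le_exp (-(ε/2))]) m
  calc (d : ℝ) ^ K * (1 - ε / 2) ^ m
      ≤ Real.exp ((K:ℝ) * Real.log d) * Real.exp ((m:ℝ) * -(ε/2)) := by
        rw [hexpd]; exact mul_le_mul_of_nonneg_left hpow (Real.exp_pos _).le
    _ = Real.exp ((K:ℝ) * Real.log d - ε/2 * m) := by rw [← Real.exp_add]; ring_nf
    _ ≤ Real.exp (Real.log (δ/2)) := by
        apply Real.exp_le_exp.mpr
        have : Real.log (δ / 2) = -L := by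
          rw [hLdef, Real.log_div (by norm_num) (ne_of_gt hδ0),
            Real.log_div (ne_of_gt hδ0) (by norm_num)]; ring
        rw [this]; linarith
    _ = δ / 2 := Real.exp_log (by positivity)

/-- Lemma 3 (no inadequate action model survives): if each inadequate
precondition assignment `b ∈ B` (with `|B| ≤ d^K`) is ruled out by a random
trajectory with probability at least `ε/2`, then after
`m ≥ (2 ln d) / ε · (K + log₂(2/δ))` independent samples, the probability
that some `b ∈ B` survives all samples is at most `δ/2`. -/
theorem no_inadequate_model_survives {Ω : Type*} [MeasurableSpace Ω]
    (μ : Measure Ω) [IsProbabilityMeasure μ]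
    (ε δ : ℝ) (hε : ε ∈ Set.Ioo (0 : ℝ) 1) (hδ : δ ∈ Set.Ioo (0 : ℝ) 1)
    (d K : ℕ) (hd : 2 ≤ d)
    {β : Type*} (B : Finset β) (hB : B.card ≤ d ^ K)
    (W : β → Set Ω)
    (hWm : ∀ b ∈ B, MeasurableSet (W b))
    (hW : ∀ b ∈ B, ENNReal.ofReal (ε / 2) ≤ μ (W b))
    (m : ℕ)
    (hm : (m : ℝ) ≥ (2 * Real.log d) / ε * (K + Real.logb 2 (2 / δ))) :
    Measure.pi (fun _ : Fin m => μ)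
        {ω : Fin m → Ω | ∃ b ∈ B, ∀ i : Fin m, ω i ∉ W b} ≤
      ENNReal.ofReal (δ / 2) := by
  have hε2 : (0:ℝ) ≤ 1 - ε / 2 := by linarith [hε.2]
  have hsingle : ∀ b ∈ B,
      Measure.pi (fun _ : Fin m => μ) {ω : Fin m → Ω | ∀ i, ω i ∉ W b}
        ≤ ENNReal.ofReal ((1 - ε / 2) ^ m) := by
    intro b hb
    have hset : {ω : Fin m → Ω | ∀ i, ω i ∉ W b} =
        Set.pi Set.univ (fun _ : Fin m => (W b)ᶜ) := by
      ext ω; simp [Set.mem_pi]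
    rw [hset, Measure.pi_pi, Finset.prod_const, Finset.card_univ, Fintype.card_fin]
    have hc : μ (W b)ᶜ ≤ ENNReal.ofReal (1 - ε / 2) := by
      rw [measure_compl (hWm b hb) (measure_ne_top μ _), measure_univ]
      calc 1 - μ (W b) ≤ 1 - ENNReal.ofReal (ε / 2) :=
            tsub_le_tsub_left (hW b hb) 1
        _ = ENNReal.ofReal (1 - ε / 2) := by
            rw [ENNReal.ofReal_sub _ (by linarith [hε.1] : (0:ℝ) ≤ ε/2),
              ENNReal.ofReal_one]
    calc μ (W b)ᶜ ^ m ≤ ENNReal.ofReal (1 - ε / 2) ^ m := pow_le_pow_left' hc m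
      _ = ENNReal.ofReal ((1 - ε / 2) ^ m) := (ENNReal.ofReal_pow hε2 m).symm
  have hunion : {ω : Fin m → Ω | ∃ b ∈ B, ∀ i : Fin m, ω i ∉ W b} =
      ⋃ b ∈ B, {ω : Fin m → Ω | ∀ i, ω i ∉ W b} := by
    ext ω; simp
  rw [hunion]
  calc Measure.pi (fun _ : Fin m => μ) (⋃ b ∈ B, {ω : Fin m → Ω | ∀ i, ω i ∉ W b})
      ≤ ∑ b ∈ B, Measure.pi (fun _ : Fin m => μ) {ω : Fin m → Ω | ∀ i, ω i ∉ W b} :=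
        measure_biUnion_finset_le B _
    _ ≤ ∑ _b ∈ B, ENNReal.ofReal ((1 - ε / 2) ^ m) := Finset.sum_le_sum hsingle
    _ = B.card * ENNReal.ofReal ((1 - ε / 2) ^ m) := by
        rw [Finset.sum_const, nsmul_eq_mul]
    _ ≤ ENNReal.ofReal ((d:ℝ) ^ K * (1 - ε / 2) ^ m) := by
        rw [ENNReal.ofReal_mul (by positivity)]
        apply mul_le_mul_left
        rw [← ENNReal.ofReal_natCast B.card]
        exact ENNReal.ofReal_le_ofReal (by exact_mod_cast hB)
    _ ≤ ENNReal.ofReal (δ / 2) :=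
        ENNReal.ofReal_le_ofReal (real_key ε δ hε hδ d K m hd hm)
end

section
/- Probabilistic core of Theorem 2: Let (Ω, μ) be a probability space, let ε, δ ∈ (0,1), let d ≥ 2, N ≥ 1, and K be natural numbers. Let J be a finite index set with |J| ≤ N and for each j ∈ J a measurable set E_j ⊆ Ω with μ(E_j) ≥ ε / (2N); let B be a finite set with |B| ≤ d^(K·N) and for each b ∈ B a measurable set W_b ⊆ Ω with μ(W_b) ≥ ε/2. Let m be a natural number with (m : ℝ) ≥ (2 · Real.log d) · N / ε · (K + Real.logb 2 (2 * N / δ)), and let μ^m be the product measure on Fin m → Ω of m independent copies of μ. Then μ^m {ω | (∀ j ∈ J, ∃ i : Fin m, ω i ∈ E_j) ∧ (∀ b ∈ B, ∃ i : Fin m, ω i ∈ W_b)} ≥ 1 - δ. -/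
open MeasureTheory
open scoped ENNReal
set_option maxHeartbeats 1000000

lemma miss_le_aux {Ω : Type*} [MeasurableSpace Ω] (μ : Measure Ω) [IsProbabilityMeasure μ]
    (m : ℕ) (S : Set Ω) (hS : MeasurableSet S) (q : ℝ) (hq0 : 0 ≤ q) (hq1 : q ≤ 1)
    (h : ENNReal.ofReal q ≤ μ S) :
    Measure.pi (fun _ : Fin m => μ) {ω : Fin m → Ω | ∀ i, ω i ∉ S}
      ≤ ENNReal.ofReal (Real.exp (-(q * m))) := by
  have hset : {ω : Fin m → Ω | ∀ i, ω i ∉ S} = Set.univ.pi (fun _ : Fin m => Sᶜ) := by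
    ext ω; simp [Set.mem_pi]
  rw [hset, Measure.pi_pi]
  simp only [Finset.prod_const, Finset.card_univ, Fintype.card_fin]
  have hc : μ Sᶜ ≤ ENNReal.ofReal (1 - q) := by
    rw [prob_compl_eq_one_sub hS, ENNReal.ofReal_sub _ hq0, ENNReal.ofReal_one]
    exact tsub_le_tsub_left h 1
  calc (μ Sᶜ) ^ m ≤ (ENNReal.ofReal (1 - q)) ^ m := pow_le_pow_left₀ (zero_le) hc m
    _ = ENNReal.ofReal ((1 - q) ^ m) := (ENNReal.ofReal_pow (by linarith) m).symm
    _ ≤ ENNReal.ofReal (Real.exp (-q) ^ m) := by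
        apply ENNReal.ofReal_le_ofReal
        apply pow_le_pow_left₀ (by linarith)
        have := Real.add_one_le_exp (-q); linarith
    _ = ENNReal.ofReal (Real.exp (-(q * m))) := by
        rw [← Real.exp_nat_mul]; ring_nf

lemma key_real (ε δ : ℝ) (hε0 : 0 < ε) (hε1 : ε < 1) (hδ0 : 0 < δ) (hδ1 : δ < 1)
    (d N K : ℕ) (hd : 2 ≤ d) (hN : 1 ≤ N) (m : ℕ)
    (hm : (m : ℝ) ≥ (2 * Real.log d) * N / ε * (K + Real.logb 2 (2 * N / δ))) :
    (N : ℝ) * Real.exp (-(ε / (2 * N) * m)) + (d : ℝ) ^ (K * N) * Real.exp (-(ε / 2 * m)) ≤ δ := by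
  have hNr : (1 : ℝ) ≤ (N : ℝ) := by exact_mod_cast hN
  have hNr0 : (0 : ℝ) < N := by linarith
  have hdr : (2 : ℝ) ≤ (d : ℝ) := by exact_mod_cast hd
  have hL2 : 0 < Real.log 2 := Real.log_pos one_lt_two
  have hLd : Real.log 2 ≤ Real.log d := Real.log_le_log two_pos hdr
  set L2 := Real.log 2 with hL2def
  set Ld := Real.log d with hLddef
  set t := Real.log (2 * N / δ) with htdef
  set t' := Real.log (2 / δ) with ht'def
  have ht'L : L2 ≤ t' := by
    rw [ht'def, hL2def]
    apply Real.log_le_log two_pos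
    rw [le_div_iff₀ hδ0]; nlinarith
  have htt' : t' ≤ t := by
    rw [ht'def, htdef]
    apply Real.log_le_log (by positivity)
    gcongr <;> nlinarith
  have ht0 : 0 < t := lt_of_lt_of_le hL2 (le_trans ht'L htt')
  have hlogb : Real.logb 2 (2 * N / δ) = t / L2 := rfl
  rw [hlogb] at hm
  -- clear the divisions in hm
  have hm1 : 2 * Ld * N * (K + t / L2) ≤ ε * m := by
    rw [ge_iff_le, div_mul_eq_mul_div, div_le_iff₀ hε0] at hm
    linarith [hm]
  have hm2 : 2 * Ld * (N : ℝ) * ((K : ℝ) * L2 + t) ≤ ε * m * L2 := by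
    have := mul_le_mul_of_nonneg_right hm1 hL2.le
    have hexp : 2 * Ld * (N : ℝ) * (K + t / L2) * L2 = 2 * Ld * N * ((K : ℝ) * L2 + t) := by
      field_simp
      try ring
    linarith [hexp ▸ this]
  have hK0 : (0 : ℝ) ≤ K := Nat.cast_nonneg K
  have hLd0 : 0 < Ld := lt_of_lt_of_le hL2 hLd
  have ht'0 : 0 < t' := lt_of_lt_of_le hL2 ht'L
  -- Goal A: ε m ≥ 2 N t
  have hA : 2 * (N : ℝ) * t ≤ ε * m := by
    have h1 : 0 ≤ (Ld - L2) * ((N:ℝ) * t) :=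
      mul_nonneg (sub_nonneg.2 hLd) (mul_nonneg hNr0.le ht0.le)
    have h2 : 0 ≤ Ld * ((N:ℝ) * ((K:ℝ) * L2)) :=
      mul_nonneg hLd0.le (mul_nonneg hNr0.le (mul_nonneg hK0 hL2.le))
    have h3 : (2 * (N:ℝ) * t) * L2 ≤ ε * m * L2 := by nlinarith [hm2]
    exact le_of_mul_le_mul_right h3 hL2
  -- Goal B: ε m ≥ 2 (K N Ld + t')
  have hB : 2 * ((K : ℝ) * N * Ld + t') ≤ ε * m := by
    have h0 : L2 * t' ≤ Ld * t := mul_le_mul hLd htt' ht'0.le hLd0.le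
    have h1 : Ld * t ≤ Ld * ((N:ℝ) * t) := by nlinarith [mul_nonneg hLd0.le ht0.le]
    have h3 : (2 * ((K : ℝ) * N * Ld + t')) * L2 ≤ ε * m * L2 := by nlinarith [hm2]
    exact le_of_mul_le_mul_right h3 hL2
  -- now convert goals to exp form
  have GA : (N : ℝ) * Real.exp (-(ε / (2 * N) * m)) ≤ δ / 2 := by
    rw [show (N : ℝ) * Real.exp (-(ε / (2 * N) * m))
        = Real.exp (Real.log N + -(ε / (2 * N) * m)) by rw [Real.exp_add, Real.exp_log hNr0]]
    rw [show δ / 2 = Real.exp (Real.log (δ / 2)) from (Real.exp_log (by linarith)).symm]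
    apply Real.exp_le_exp.mpr
    have hlogδ2 : Real.log (δ / 2) = Real.log δ - L2 := Real.log_div (ne_of_gt hδ0) two_ne_zero
    have htexp : t = L2 + Real.log N - Real.log δ := by
      rw [htdef, Real.log_div (by positivity) (ne_of_gt hδ0),
        Real.log_mul two_ne_zero (ne_of_gt hNr0)]
    rw [hlogδ2]
    have hεm : t ≤ ε / (2 * N) * m := by
      rw [div_mul_eq_mul_div, le_div_iff₀ (by positivity)]
      linarith [hA]
    linarith [htexp ▸ hεm]
  have GB : (d : ℝ) ^ (K * N) * Real.exp (-(ε / 2 * m)) ≤ δ / 2 := by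
    have hdpow : (d : ℝ) ^ (K * N) = Real.exp (((K * N : ℕ) : ℝ) * Ld) := by
      rw [Real.exp_nat_mul, Real.exp_log (by linarith)]
    rw [hdpow, ← Real.exp_add]
    rw [show δ / 2 = Real.exp (Real.log (δ / 2)) from (Real.exp_log (by linarith)).symm]
    apply Real.exp_le_exp.mpr
    have hlogδ2 : Real.log (δ / 2) = Real.log δ - L2 := Real.log_div (ne_of_gt hδ0) two_ne_zero
    have ht'exp : t' = L2 - Real.log δ := by
      rw [ht'def, Real.log_div two_ne_zero (ne_of_gt hδ0)]
    have hcast : ((K * N : ℕ) : ℝ) = (K : ℝ) * N := by push_cast; ring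
    rw [hlogδ2, hcast]
    nlinarith [hB, ht'exp]
  linarith



/-- Probabilistic core of Theorem 2: with
`m ≥ (2 ln d) · N / ε · (K + log₂(2N/δ))` independent samples, with
probability at least `1 - δ`, every frequently-used action `j ∈ J`
(`|J| ≤ N`, `μ(E j) ≥ ε/(2N)`) is observed in some sample and every
inadequate precondition assignment `b ∈ B` (`|B| ≤ d^(K·N)`,
`μ(W b) ≥ ε/2`) is ruled out by some sample. -/
theorem theorem2_probabilistic_core {Ω : Type*} [MeasurableSpace Ω]
    (μ : Measure Ω) [IsProbabilityMeasure μ]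
    (ε δ : ℝ) (hε : ε ∈ Set.Ioo (0 : ℝ) 1) (hδ : δ ∈ Set.Ioo (0 : ℝ) 1)
    (d N K : ℕ) (hd : 2 ≤ d) (hN : 1 ≤ N)
    {ι : Type*} (J : Finset ι) (hJ : J.card ≤ N)
    (E : ι → Set Ω)
    (hEm : ∀ j ∈ J, MeasurableSet (E j))
    (hE : ∀ j ∈ J, ENNReal.ofReal (ε / (2 * N)) ≤ μ (E j))
    {β : Type*} (B : Finset β) (hB : B.card ≤ d ^ (K * N))
    (W : β → Set Ω)
    (hWm : ∀ b ∈ B, MeasurableSet (W b))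
    (hW : ∀ b ∈ B, ENNReal.ofReal (ε / 2) ≤ μ (W b))
    (m : ℕ)
    (hm : (m : ℝ) ≥ (2 * Real.log d) * N / ε * (K + Real.logb 2 (2 * N / δ))) :
    ENNReal.ofReal (1 - δ) ≤
      Measure.pi (fun _ : Fin m => μ)
        {ω : Fin m → Ω |
          (∀ j ∈ J, ∃ i : Fin m, ω i ∈ E j) ∧
          (∀ b ∈ B, ∃ i : Fin m, ω i ∈ W b)} := by
  obtain ⟨hε0, hε1⟩ := hε
  obtain ⟨hδ0, hδ1⟩ := hδ
  have hNr : (1 : ℝ) ≤ (N : ℝ) := by exact_mod_cast hN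
  set π := Measure.pi (fun _ : Fin m => μ) with hπ
  set good := {ω : Fin m → Ω |
      (∀ j ∈ J, ∃ i : Fin m, ω i ∈ E j) ∧ (∀ b ∈ B, ∃ i : Fin m, ω i ∈ W b)} with hgood
  set bad := (⋃ j ∈ J, {ω : Fin m → Ω | ∀ i, ω i ∉ E j})
      ∪ (⋃ b ∈ B, {ω : Fin m → Ω | ∀ i, ω i ∉ W b}) with hbad
  have cover : (Set.univ : Set (Fin m → Ω)) ⊆ good ∪ bad := by
    intro ω _
    by_cases h : ω ∈ good
    · exact Or.inl h
    · right
      rw [hgood, Set.mem_setOf_eq, not_and_or] at h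
      rcases h with h | h
      · push_neg at h
        obtain ⟨j, hj, hji⟩ := h
        exact Or.inl (Set.mem_biUnion hj hji)
      · push_neg at h
        obtain ⟨b, hb, hbi⟩ := h
        exact Or.inr (Set.mem_biUnion hb hbi)
  have hq1a : (0:ℝ) ≤ ε / (2 * N) := by positivity
  have hq1b : ε / (2 * N) ≤ 1 := by
    rw [div_le_one (by positivity)]; nlinarith
  have hq2a : (0:ℝ) ≤ ε / 2 := by positivity
  have hq2b : ε / 2 ≤ 1 := by linarith
  have hbadJ : π (⋃ j ∈ J, {ω : Fin m → Ω | ∀ i, ω i ∉ E j})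
      ≤ (N : ℝ≥0∞) * ENNReal.ofReal (Real.exp (-(ε / (2 * N) * m))) := by
    calc π (⋃ j ∈ J, {ω : Fin m → Ω | ∀ i, ω i ∉ E j})
        ≤ ∑ j ∈ J, π {ω : Fin m → Ω | ∀ i, ω i ∉ E j} := measure_biUnion_finset_le J _
      _ ≤ J.card • ENNReal.ofReal (Real.exp (-(ε / (2 * N) * m))) := by
          apply Finset.sum_le_card_nsmul
          intro j hj
          exact miss_le_aux μ m (E j) (hEm j hj) _ hq1a hq1b (hE j hj)
      _ = (J.card : ℝ≥0∞) * ENNReal.ofReal (Real.exp (-(ε / (2 * N) * m))) := by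
          rw [nsmul_eq_mul]
      _ ≤ (N : ℝ≥0∞) * ENNReal.ofReal (Real.exp (-(ε / (2 * N) * m))) := by
          gcongr
          all_goals exact_mod_cast hJ
  have hbadB : π (⋃ b ∈ B, {ω : Fin m → Ω | ∀ i, ω i ∉ W b})
      ≤ ((d ^ (K * N) : ℕ) : ℝ≥0∞) * ENNReal.ofReal (Real.exp (-(ε / 2 * m))) := by
    calc π (⋃ b ∈ B, {ω : Fin m → Ω | ∀ i, ω i ∉ W b})
        ≤ ∑ b ∈ B, π {ω : Fin m → Ω | ∀ i, ω i ∉ W b} := measure_biUnion_finset_le B _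
      _ ≤ B.card • ENNReal.ofReal (Real.exp (-(ε / 2 * m))) := by
          apply Finset.sum_le_card_nsmul
          intro b hb
          exact miss_le_aux μ m (W b) (hWm b hb) _ hq2a hq2b (hW b hb)
      _ = (B.card : ℝ≥0∞) * ENNReal.ofReal (Real.exp (-(ε / 2 * m))) := by
          rw [nsmul_eq_mul]
      _ ≤ ((d ^ (K * N) : ℕ) : ℝ≥0∞) * ENNReal.ofReal (Real.exp (-(ε / 2 * m))) := by
          gcongr
          all_goals exact_mod_cast hB
  have hbadle : π bad ≤ ENNReal.ofReal δ := by
    calc π bad ≤ π (⋃ j ∈ J, {ω : Fin m → Ω | ∀ i, ω i ∉ E j})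
          + π (⋃ b ∈ B, {ω : Fin m → Ω | ∀ i, ω i ∉ W b}) := measure_union_le _ _
      _ ≤ (N : ℝ≥0∞) * ENNReal.ofReal (Real.exp (-(ε / (2 * N) * m)))
          + ((d ^ (K * N) : ℕ) : ℝ≥0∞) * ENNReal.ofReal (Real.exp (-(ε / 2 * m))) :=
          add_le_add hbadJ hbadB
      _ = ENNReal.ofReal ((N : ℝ) * Real.exp (-(ε / (2 * N) * m))
          + ((d : ℝ) ^ (K * N)) * Real.exp (-(ε / 2 * m))) := by
          rw [ENNReal.ofReal_add (by positivity) (by positivity),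
            ENNReal.ofReal_mul (by positivity), ENNReal.ofReal_mul (by positivity),
            ENNReal.ofReal_natCast, ← Nat.cast_pow, ENNReal.ofReal_natCast]
      _ ≤ ENNReal.ofReal δ := by
          apply ENNReal.ofReal_le_ofReal
          exact key_real ε δ hε0 hε1 hδ0 hδ1 d N K hd hN m hm
  have h1 : (1 : ℝ≥0∞) ≤ π good + π bad := by
    calc (1 : ℝ≥0∞) = π Set.univ := (measure_univ).symm
      _ ≤ π (good ∪ bad) := measure_mono cover
      _ ≤ π good + π bad := measure_union_le _ _
  calc ENNReal.ofReal (1 - δ) = 1 - ENNReal.ofReal δ := by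
        rw [ENNReal.ofReal_sub _ hδ0.le, ENNReal.ofReal_one]
    _ ≤ 1 - π bad := tsub_le_tsub_left hbadle 1
    _ ≤ π good := by
        rw [tsub_le_iff_right]
        exact h1.trans (by rw [add_comm])
end
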